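/- arXiv:2412.13785 — 2 statements merged into one kernel-verified Lean document; each statement's English description precedes it below -/
import Mathlib

section
/- If there exists an injection from X into S × η for some ordinal η, then there exists an injection from X into S × η' for some ordinal η' that is 'minitial': η' is least among ordinals such that X injects into S × η', and for every s ∈ S, the image of the injection intersected with {s} × η' equals {s} × η_s for some ordinal η_s ≤ η'. -/
universe u

/-- The ordinal corresponding to an element of `o.ToType`. -/
noncomputable def ordIdx {o : Ordinal.{u}} (β : o.ToType) : Ordinal.{u} :=
  @Ordinal.typein o.ToType (· < ·) isWellOrder_lt β

lemma ordIdx_enumIsoToType {o : Ordinal.{u}} (y : Set.Iio o) :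
    ordIdx (Ordinal.ToType.mk (o := o) y) = y.1 := by
  rw [ordIdx, Ordinal.ToType.mk_apply]
  exact @Ordinal.typein_enum o.ToType (· < ·) isWellOrder_lt _ _

lemma enumIsoToType_ordIdx {o : Ordinal.{u}} (β : o.ToType) (h : ordIdx β < o) :
    Ordinal.ToType.mk (o := o) ⟨ordIdx β, h⟩ = β := by
  rw [Ordinal.ToType.mk_apply]
  exact @Ordinal.enum_typein o.ToType (· < ·) isWellOrder_lt β

/-- if `X` injects into `S × η` for some ordinal `η`, then there is a
minitial embedding of `X` into some `S × η'`: `η'` is least among ordinals such that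
`X` injects into `S × η'`, and for each `s : S` the image of the injection meets
`{s} × η'` in an initial segment `{s} × η_s` with `η_s ≤ η'`. -/
theorem minitial_embedding_exists (S X : Type u)
    (h : ∃ η : Ordinal.{u}, ∃ f : X → S × η.ToType, Function.Injective f) :
    ∃ η' : Ordinal.{u}, ∃ f : X → S × η'.ToType, Function.Injective f ∧
      (∀ ξ : Ordinal.{u}, (∃ g : X → S × ξ.ToType, Function.Injective g) → η' ≤ ξ) ∧
      (∀ s : S, ∃ ηs : Ordinal.{u}, ηs ≤ η' ∧
        ∀ β : η'.ToType, (s, β) ∈ Set.range f ↔ ordIdx β < ηs) := by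
  classical
  set P : Set Ordinal.{u} := {ξ | ∃ g : X → S × ξ.ToType, Function.Injective g} with hP
  have hne : P.Nonempty := h
  set η' : Ordinal.{u} := sInf P with hη'
  obtain ⟨g, hg⟩ : η' ∈ P := csInf_mem hne
  set A : S → Set η'.ToType := fun s => {β | (s, β) ∈ Set.range g} with hA
  haveI hwos : ∀ s : S, IsWellOrder (A s) (· < ·) := fun s => isWellOrder_lt
  set ηs : S → Ordinal.{u} := fun s => @Ordinal.type (A s) (· < ·) (hwos s) with hηsdef
  have hηs : ∀ s, ηs s ≤ η' := by
    intro s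
    have hm : ∀ a b : A s, a < b → (a : η'.ToType) < b := fun a b hab => hab
    have h2 := @RelEmbedding.ordinal_type_le (A s) η'.ToType (· < ·) (· < ·) (hwos s)
      isWellOrder_lt (RelEmbedding.ofMonotone (fun a : A s => (a : η'.ToType)) hm)
    rwa [Ordinal.type_toType] at h2
  have hmem : ∀ x : X, (g x).2 ∈ A ((g x).1) := fun x => ⟨x, rfl⟩
  set i : X → Ordinal.{u} :=
    fun x => @Ordinal.typein (A ((g x).1)) (· < ·) (hwos _) ⟨(g x).2, hmem x⟩ with hidef
  have hi : ∀ x, i x < η' := fun x =>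
    (@Ordinal.typein_lt_type (A ((g x).1)) (· < ·) (hwos _) _).trans_le (hηs ((g x).1))
  set f : X → S × η'.ToType :=
    fun x => ((g x).1, Ordinal.ToType.mk (o := η') ⟨i x, hi x⟩) with hfdef
  have key : ∀ (x : X) (s : S) (hs : (g x).1 = s) (hm : (g x).2 ∈ A s),
      i x = @Ordinal.typein (A s) (· < ·) (hwos s) ⟨(g x).2, hm⟩ := by
    intro x s hs hm
    subst hs
    rfl
  refine ⟨η', f, ?_, ?_, ?_⟩
  · intro x y hxy
    apply hg
    have h1' := congrArg Prod.fst hxy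
    have h1 : (g x).1 = (g y).1 := h1'
    have h2 : i x = i y := by
      have h2' := (Ordinal.ToType.mk (o := η')).injective (congrArg Prod.snd hxy)
      exact congrArg Subtype.val h2'
    have hmy : (g y).2 ∈ A ((g x).1) := h1 ▸ hmem y
    have h3 : i x = @Ordinal.typein (A ((g x).1)) (· < ·) (hwos _) ⟨(g y).2, hmy⟩ := by
      rw [h2, key y ((g x).1) h1.symm hmy]
    have h4 : (⟨(g x).2, hmem x⟩ : A ((g x).1)) = ⟨(g y).2, hmy⟩ :=
      @Ordinal.typein_injective (A ((g x).1)) (· < ·) (hwos _) _ _ h3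
    have h5 : (g x).2 = (g y).2 := congrArg Subtype.val h4
    exact Prod.ext h1 h5
  · intro ξ hξ
    exact csInf_le' hξ
  · intro s
    refine ⟨ηs s, hηs s, fun β => ⟨?_, ?_⟩⟩
    · rintro ⟨x, hx⟩
      have h1' := congrArg Prod.fst hx
      have h1 : (g x).1 = s := h1'
      have hb2 : Ordinal.ToType.mk (o := η') ⟨i x, hi x⟩ = β := congrArg Prod.snd hx
      have h2 : ordIdx β = i x := by
        rw [← hb2, ordIdx_enumIsoToType]
      rw [h2, key x s h1 (h1 ▸ hmem x)]
      exact @Ordinal.typein_lt_type (A s) (· < ·) (hwos s) _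
    · intro hβ
      obtain ⟨⟨b, hb⟩, hab⟩ := @Ordinal.typein_surj (A s) (· < ·) (hwos s) _ hβ
      obtain ⟨x, hx⟩ := hb
      refine ⟨x, ?_⟩
      have h1' := congrArg Prod.fst hx
      have h1 : (g x).1 = s := h1'
      have h2' := congrArg Prod.snd hx
      have h2 : (g x).2 = b := h2'
      have h3 : i x = ordIdx β := by
        rw [key x s h1 (h1 ▸ hmem x), ← hab]
        congr 1
        exact Subtype.ext h2
      have h4 : Ordinal.ToType.mk (o := η') ⟨i x, hi x⟩ = β := by
        rw [show (⟨i x, hi x⟩ : Set.Iio η') = ⟨ordIdx β, h3 ▸ hi x⟩ from Subtype.ext h3]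
        exact enumIsoToType_ordIdx β _
      rw [hfdef]
      exact Prod.ext h1 h4
end

section
/- SVC⁺(S) implies SVC(S), and SVC(S) implies SVC⁺(𝒫(S)). -/
universe u

/-- `|X| ≤* |Y|`: a subset of `Y` surjects onto `X`. -/
def SurjOnto (X Y : Type u) : Prop :=
  ∃ (A : Set Y) (f : A → X), Function.Surjective f

/-- Small violations of choice with seed `S`. -/
def SVC (S : Type u) : Prop :=
  ∀ X : Type u, ∃ η : Ordinal.{u}, SurjOnto X (S × η.ToType)

/-- The injective form of small violations of choice with seed `S`. -/
def SVCplus (S : Type u) : Prop :=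
  ∀ X : Type u, ∃ η : Ordinal.{u}, ∃ f : X → S × η.ToType, Function.Injective f

/-- `SVC⁺(S)` implies `SVC(S)`, and `SVC(S)` implies `SVC⁺(𝒫(S))`. -/
theorem svcplus_implies_svc_and_svc_implies_svcplus_powerset (S : Type u) :
    (SVCplus S → SVC S) ∧ (SVC S → SVCplus (Set S)) := by
  constructor
  · intro h X
    obtain ⟨η, f, hf⟩ := h X
    exact ⟨η, Set.range f, (Equiv.ofInjective f hf).symm,
      (Equiv.ofInjective f hf).symm.surjective⟩
  · intro h X
    obtain ⟨η, A, g, hg⟩ := h X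
    set B : X → Set η.ToType := fun x => {b | ∃ s, ∃ h : (s, b) ∈ A, g ⟨(s, b), h⟩ = x}
      with hBdef
    have hB : ∀ x, (B x).Nonempty := by
      intro x
      obtain ⟨⟨⟨s, b⟩, hm⟩, ha⟩ := hg x
      exact ⟨b, s, hm, ha⟩
    have wf : WellFounded ((· < ·) : η.ToType → η.ToType → Prop) := IsWellFounded.wf
    set o : X → η.ToType := fun x => wf.min (B x) (hB x) with hodef
    have ho : ∀ x, o x ∈ B x := fun x => wf.min_mem (B x) (hB x)
    refine ⟨η, fun x => ({s | ∃ h : (s, o x) ∈ A, g ⟨(s, o x), h⟩ = x}, o x), ?_⟩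
    intro x y hxy
    simp only [Prod.mk.injEq] at hxy
    obtain ⟨hset, hoxy⟩ := hxy
    obtain ⟨s, hm, hsx⟩ := ho x
    have hsmem : s ∈ {s | ∃ h : (s, o x) ∈ A, g ⟨(s, o x), h⟩ = x} := ⟨hm, hsx⟩
    rw [hset] at hsmem
    obtain ⟨hm', hsy⟩ := hsmem
    rw [← hsx, ← hsy]
    exact congrArg g (Subtype.ext (show (s, o x) = (s, o y) by rw [hoxy]))
end
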